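/- Define f on positive integers by f(1) = 0 and f(n+1) = f(n) + n + 1. Let 𝒜 ⊆ 2^ω be a measurable set with λ(𝒜) ≥ 1/2. Then for every n ≥ 1 and every string τ of length f(n) with λ(𝒜 | τ) ≥ 2^{-n}, there exist at least two distinct extensions σ of τ of length f(n+1) such that λ(𝒜 | σ) ≥ 2^{-(n+1)}. -/

import Mathlib

open MeasureTheory
open scoped ENNReal

/-- `σ` is an initial segment of the infinite binary sequence `X`. -/
def PrefixOf (σ : List Bool) (X : ℕ → Bool) : Prop :=
  σ = (List.range σ.length).map X

/-- The cylinder `[σ]` of all infinite binary sequences extending the string `σ`. -/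
def cyl (σ : List Bool) : Set (ℕ → Bool) := {X | PrefixOf σ X}

/-- Let `f(1) = 0` and `f(n+1) = f(n) + n + 1`, and let `𝒜` be measurable with `λ(𝒜) ≥ 1/2`.
Then for every `n ≥ 1` and every string `τ` of length `f(n)` with `λ(𝒜 | τ) ≥ 2^{-n}`,
there are at least two distinct extensions `σ` of `τ` of length `f(n+1)` with
`λ(𝒜 | σ) ≥ 2^{-(n+1)}`.  Here `μ` is the fair-coin measure on Cantor space,
characterized by its values `μ [σ] = 2^{-|σ|}` on cylinders. -/
theorem stmt1 (μ : Measure (ℕ → Bool))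
    (hμ : ∀ σ : List Bool, μ (cyl σ) = (2 : ℝ≥0∞)⁻¹ ^ σ.length)
    (f : ℕ → ℕ) (hf1 : f 1 = 0) (hf : ∀ n : ℕ, 1 ≤ n → f (n + 1) = f n + n + 1)
    (A : Set (ℕ → Bool)) (hA : MeasurableSet A) (hA2 : (2 : ℝ≥0∞)⁻¹ ≤ μ A) :
    ∀ n : ℕ, 1 ≤ n → ∀ τ : List Bool, τ.length = f n →
      (2 : ℝ≥0∞)⁻¹ ^ n ≤ μ (A ∩ cyl τ) / μ (cyl τ) →
      ∃ σ₁ σ₂ : List Bool, σ₁ ≠ σ₂ ∧ τ <+: σ₁ ∧ τ <+: σ₂ ∧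
        σ₁.length = f (n + 1) ∧ σ₂.length = f (n + 1) ∧
        (2 : ℝ≥0∞)⁻¹ ^ (n + 1) ≤ μ (A ∩ cyl σ₁) / μ (cyl σ₁) ∧
        (2 : ℝ≥0∞)⁻¹ ^ (n + 1) ≤ μ (A ∩ cyl σ₂) / μ (cyl σ₂) := by
  intro n hn τ hτ hcond
  classical
  set k := n + 1 with hk
  set ε : ℝ≥0∞ := (2 : ℝ≥0∞)⁻¹ ^ k with hε
  set L := f n + n + 1 with hL
  set c : ℝ≥0∞ := (2 : ℝ≥0∞)⁻¹ ^ L with hc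
  have h2ne0 : (2 : ℝ≥0∞)⁻¹ ≠ 0 := by simp
  have h2netop : (2 : ℝ≥0∞)⁻¹ ≠ ⊤ := by simp
  have hcne0 : c ≠ 0 := pow_ne_zero _ h2ne0
  have hcnetop : c ≠ ⊤ := ENNReal.pow_ne_top h2netop
  have hεne0 : ε ≠ 0 := pow_ne_zero _ h2ne0
  have hεnetop : ε ≠ ⊤ := ENNReal.pow_ne_top h2netop
  have hfL : f (n + 1) = L := by rw [hf n hn]
  have hσlen : ∀ g : Fin k → Bool, (τ ++ List.ofFn g).length = f (n + 1) := by
    intro g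
    simp [hτ, hfL, hL, hk]
    omega
  have hcylσ : ∀ g : Fin k → Bool, μ (cyl (τ ++ List.ofFn g)) = c := by
    intro g
    rw [hμ, hσlen g, hfL]
  set Good : (Fin k → Bool) → Prop := fun g =>
    ε ≤ μ (A ∩ cyl (τ ++ List.ofFn g)) / μ (cyl (τ ++ List.ofFn g)) with hGood
  by_cases h2 : ∃ g₁ g₂ : Fin k → Bool, g₁ ≠ g₂ ∧ Good g₁ ∧ Good g₂
  · obtain ⟨g₁, g₂, hne, hg1, hg2⟩ := h2
    refine ⟨τ ++ List.ofFn g₁, τ ++ List.ofFn g₂, ?_, List.prefix_append _ _,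
      List.prefix_append _ _, hσlen _, hσlen _, hg1, hg2⟩
    intro habs
    exact hne (List.ofFn_injective (List.append_cancel_left habs))
  -- at most one good extension: derive a contradiction
  exfalso
  push_neg at h2
  set G : Finset (Fin k → Bool) := Finset.univ.filter Good with hG
  have hcard : G.card ≤ 1 := by
    apply Finset.card_le_one.mpr
    intro a ha b hb
    by_contra hab
    exact hab (h2 a b hab (Finset.mem_filter.mp ha).2 (Finset.mem_filter.mp hb).2 |>.elim)
  -- cover
  have hcover : A ∩ cyl τ ⊆ ⋃ g ∈ (Finset.univ : Finset (Fin k → Bool)),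
      (A ∩ cyl (τ ++ List.ofFn g)) := by
    rintro X ⟨hXA, hXτ⟩
    simp only [Set.mem_iUnion, Finset.mem_univ, exists_true_left]
    refine ⟨fun i => X (τ.length + i), hXA, ?_⟩
    show PrefixOf _ X
    unfold PrefixOf
    have hlen : (τ ++ List.ofFn fun i : Fin k => X (τ.length + ↑i)).length = τ.length + k := by
      simp [hk]
    rw [hlen, List.range_add, List.map_append]
    have hXτ' : τ = (List.range τ.length).map X := hXτ
    rw [← hXτ']
    congr 1
    apply List.ext_getElem (by simp [hk])
    intro i h1 h2
    simp only [List.getElem_ofFn, List.getElem_map, List.getElem_range]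
  have hsum : μ (A ∩ cyl τ) ≤
      ∑ g : Fin k → Bool, μ (A ∩ cyl (τ ++ List.ofFn g)) :=
    (measure_mono hcover).trans (measure_biUnion_finset_le _ _)
  -- bounds on each term
  have hgood_bd : ∀ g ∈ G, μ (A ∩ cyl (τ ++ List.ofFn g)) ≤ c := by
    intro g _
    calc μ (A ∩ cyl (τ ++ List.ofFn g)) ≤ μ (cyl (τ ++ List.ofFn g)) :=
          measure_mono Set.inter_subset_right
      _ = c := hcylσ g
  have hbad_bd : ∀ g ∈ Finset.univ.filter (fun g => ¬ Good g),
      μ (A ∩ cyl (τ ++ List.ofFn g)) ≤ ε * c := by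
    intro g hg
    have hng : ¬ Good g := (Finset.mem_filter.mp hg).2
    have hlt : μ (A ∩ cyl (τ ++ List.ofFn g)) / μ (cyl (τ ++ List.ofFn g)) < ε :=
      lt_of_not_ge hng
    rw [hcylσ g] at hlt
    exact le_of_lt ((ENNReal.div_lt_iff (Or.inl hcne0) (Or.inl hcnetop)).mp hlt)
  -- lower bound : 2 * c ≤ μ (A ∩ cyl τ)
  have hmul2 : (2 : ℝ≥0∞) * 2⁻¹ = 1 := ENNReal.mul_inv_cancel two_ne_zero ENNReal.ofNat_ne_top
  have hμτ : μ (cyl τ) = (2 : ℝ≥0∞)⁻¹ ^ (f n) := by rw [hμ, hτ]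
  have hlow : 2 * c ≤ μ (A ∩ cyl τ) := by
    have h := (ENNReal.le_div_iff_mul_le (Or.inl (by rw [hμτ]; exact pow_ne_zero _ h2ne0))
      (Or.inl (by rw [hμτ]; exact ENNReal.pow_ne_top h2netop))).mp hcond
    calc 2 * c = (2 : ℝ≥0∞)⁻¹ ^ n * μ (cyl τ) := by
          rw [hμτ, hc, hL]
          calc 2 * (2:ℝ≥0∞)⁻¹ ^ (f n + n + 1)
              = (2 * 2⁻¹) * ((2:ℝ≥0∞)⁻¹ ^ n * 2⁻¹ ^ (f n)) := by
                rw [pow_add, pow_add, pow_one]; ring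
            _ = (2:ℝ≥0∞)⁻¹ ^ n * 2⁻¹ ^ (f n) := by rw [hmul2, one_mul]
      _ ≤ μ (A ∩ cyl τ) := h
  -- counting
  have hεcne0 : ε * c ≠ 0 := by simp [hεne0, hcne0]
  have hεcnetop : ε * c ≠ ⊤ := ENNReal.mul_ne_top hεnetop hcnetop
  have hcardpow : ((2 : ℝ≥0∞) ^ k) * ε = 1 := by
    rw [hε, ← ENNReal.inv_pow]
    exact ENNReal.mul_inv_cancel (pow_ne_zero _ two_ne_zero)
      (ENNReal.pow_ne_top ENNReal.ofNat_ne_top)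
  have hcastpow : ((2 ^ k : ℕ) : ℝ≥0∞) = (2 : ℝ≥0∞) ^ k := by push_cast; ring
  set B : Finset (Fin k → Bool) := Finset.univ.filter (fun g => ¬ Good g) with hB
  have hcards : G.card + B.card = 2 ^ k := by
    rw [hG, hB, Finset.card_filter_add_card_filter_not]
    simp [Fintype.card_fun]
  have hsplit : ∑ g : Fin k → Bool, μ (A ∩ cyl (τ ++ List.ofFn g))
      = (∑ g ∈ G, μ (A ∩ cyl (τ ++ List.ofFn g)))
        + ∑ g ∈ B, μ (A ∩ cyl (τ ++ List.ofFn g)) :=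
    (Finset.sum_filter_add_sum_filter_not _ _ _).symm
  have hb1 : ∑ g ∈ G, μ (A ∩ cyl (τ ++ List.ofFn g)) ≤ G.card • c :=
    Finset.sum_le_card_nsmul _ _ _ hgood_bd
  have hb2 : ∑ g ∈ B, μ (A ∩ cyl (τ ++ List.ofFn g)) ≤ B.card • (ε * c) :=
    Finset.sum_le_card_nsmul _ _ _ hbad_bd
  have htot : 2 * c ≤ (G.card : ℝ≥0∞) * c + (B.card : ℝ≥0∞) * (ε * c) := by
    calc 2 * c ≤ μ (A ∩ cyl τ) := hlow
      _ ≤ ∑ g : Fin k → Bool, μ (A ∩ cyl (τ ++ List.ofFn g)) := hsum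
      _ ≤ G.card • c + B.card • (ε * c) := by rw [hsplit]; exact add_le_add hb1 hb2
      _ = (G.card : ℝ≥0∞) * c + (B.card : ℝ≥0∞) * (ε * c) := by
          rw [nsmul_eq_mul, nsmul_eq_mul]
  have hfullB : ((2 ^ k : ℕ) : ℝ≥0∞) * (ε * c) = c := by
    rw [hcastpow, ← mul_assoc, hcardpow, one_mul]
  have h2c : (2 : ℝ≥0∞) * c = c + c := by ring
  have hGc01 : G.card = 0 ∨ G.card = 1 := by omega
  rcases hGc01 with hGc | hGc
  · -- no good extensions
    have hBc : B.card = 2 ^ k := by omega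
    rw [hGc, hBc] at htot
    simp only [Nat.cast_zero, zero_mul, zero_add] at htot
    rw [hfullB] at htot
    have : (2 : ℝ≥0∞) * c ≤ 1 * c := by rwa [one_mul]
    have h21 : (2 : ℝ≥0∞) ≤ 1 := (ENNReal.mul_le_mul_iff_left hcne0 hcnetop).mp this
    norm_num at h21
  · -- exactly one good extension
    have hBc : B.card = 2 ^ k - 1 := by omega
    rw [hGc, hBc] at htot
    simp only [Nat.cast_one, one_mul] at htot
    have hstrict : ((2 ^ k - 1 : ℕ) : ℝ≥0∞) * (ε * c) < ((2 ^ k : ℕ) : ℝ≥0∞) * (ε * c) := by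
      refine (ENNReal.mul_lt_mul_iff_left hεcne0 hεcnetop).mpr ?_
      exact_mod_cast Nat.sub_lt (Nat.pow_pos (n := k) (by norm_num)) one_pos
    have : 2 * c < 2 * c := by
      calc 2 * c ≤ c + ((2 ^ k - 1 : ℕ) : ℝ≥0∞) * (ε * c) := htot
        _ < c + ((2 ^ k : ℕ) : ℝ≥0∞) * (ε * c) := ENNReal.add_lt_add_left hcnetop hstrict
        _ = c + c := by rw [hfullB]
        _ = 2 * c := h2c.symm
    exact lt_irrefl _ this
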